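/- For any real α > 0, any positive integer m, and any integer M > 2m+1, there exists N_0 such that for all k ≥ N_0 the following three conditions hold simultaneously: (A) α·m·(n_k − 1)/(log n_k·log log n_k) > M + 1; (B) log n_{k+1}·log log n_{k+1} − log n_k·log log n_k < α/2; (C) n_{k+1} − n_k < n_k/k^{1/8}. -/

import Mathlib

set_option maxHeartbeats 1000000

open Filter Real

noncomputable section

def sparseSeq (k : ℕ) : ℕ := ⌊Real.exp ((k : ℝ) ^ ((3 : ℝ) / 4))⌋₊

namespace SparseAux

/-- `E k = exp (k^{3/4})`. -/
def E (k : ℕ) : ℝ := Real.exp ((k : ℝ) ^ ((3 : ℝ) / 4))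

lemma E_pos (k : ℕ) : 0 < E k := Real.exp_pos _

lemma sparse_le (k : ℕ) : (sparseSeq k : ℝ) ≤ E k := Nat.floor_le (E_pos k).le

lemma lt_sparse (k : ℕ) : E k - 1 < (sparseSeq k : ℝ) := Nat.sub_one_lt_floor _

lemma sparse_mono {j k : ℕ} (h : j ≤ k) : sparseSeq j ≤ sparseSeq k :=
  Nat.floor_mono (Real.exp_le_exp.mpr
    (Real.rpow_le_rpow (Nat.cast_nonneg _) (Nat.cast_le.mpr h) (by norm_num)))

lemma quad_le_exp {x : ℝ} (hx : 0 ≤ x) : x ^ 2 / 4 ≤ Real.exp x := by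
  have h := Real.add_one_le_exp (x / 2)
  have h2 : Real.exp x = Real.exp (x / 2) * Real.exp (x / 2) := by
    rw [← Real.exp_add]; ring_nf
  nlinarith [Real.exp_pos (x / 2)]

lemma rpow_sq (k : ℕ) : ((k : ℝ) ^ ((3 : ℝ) / 4)) ^ 2 = (k : ℝ) ^ ((3 : ℝ) / 2) := by
  rw [← Real.rpow_natCast ((k : ℝ) ^ ((3 : ℝ) / 4)) 2, ← Real.rpow_mul (Nat.cast_nonneg k)]
  norm_num

lemma k32_le_E (k : ℕ) : (k : ℝ) ^ ((3 : ℝ) / 2) / 4 ≤ E k := by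
  have := quad_le_exp (Real.rpow_nonneg (Nat.cast_nonneg k) ((3 : ℝ) / 4))
  rwa [rpow_sq] at this

/-- Bernoulli-type bound: `(k+1)^{3/4} - k^{3/4} ≤ k^{-1/4}` for `k ≥ 1`. -/
lemma succ_rpow_le {k : ℕ} (hk : 1 ≤ k) :
    ((k : ℝ) + 1) ^ ((3 : ℝ) / 4) ≤ (k : ℝ) ^ ((3 : ℝ) / 4) + (k : ℝ) ^ (-(1 : ℝ) / 4) := by
  have hk0 : (0 : ℝ) < k := by exact_mod_cast hk
  have hs : (-1 : ℝ) ≤ 1 / (k : ℝ) := by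
    have h0 : (0:ℝ) ≤ 1 / (k:ℝ) := by positivity
    linarith
  have hbern := rpow_one_add_le_one_add_mul_self (s := 1 / (k : ℝ))
    hs (by norm_num : (0:ℝ) ≤ 3/4) (by norm_num)
  have hk1 : ((k : ℝ) + 1) = k * (1 + 1 / k) := by field_simp
  have hmul : (k : ℝ) ^ ((3 : ℝ) / 4) * (1 / k) = (k : ℝ) ^ (-(1 : ℝ) / 4 - 1 + 1) := by
    rw [one_div, show (-(1:ℝ)/4 - 1 + 1) = (3:ℝ)/4 + (-1) by norm_num,
      Real.rpow_add hk0, Real.rpow_neg_one]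
  calc ((k : ℝ) + 1) ^ ((3 : ℝ) / 4)
      = (k : ℝ) ^ ((3 : ℝ) / 4) * (1 + 1 / k) ^ ((3 : ℝ) / 4) := by
        rw [hk1, Real.mul_rpow hk0.le (by positivity)]
    _ ≤ (k : ℝ) ^ ((3 : ℝ) / 4) * (1 + 3 / 4 * (1 / k)) := by
        exact mul_le_mul_of_nonneg_left hbern (Real.rpow_nonneg hk0.le _)
    _ ≤ (k : ℝ) ^ ((3 : ℝ) / 4) + (k : ℝ) ^ (-(1 : ℝ) / 4) := by
        rw [mul_add, mul_one]
        have h2 : (k : ℝ) ^ ((3 : ℝ) / 4) * (3 / 4 * (1 / k))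
            = 3 / 4 * ((k : ℝ) ^ (-(1 : ℝ) / 4)) := by
          rw [show (k : ℝ) ^ ((3:ℝ)/4) * (3/4 * (1/k)) = 3/4 * ((k : ℝ) ^ ((3:ℝ)/4) * (1/k)) by ring,
            hmul]
          norm_num
        rw [h2]
        nlinarith [Real.rpow_nonneg hk0.le (-(1:ℝ)/4)]

/-- `log x ≤ 8 * x^{1/8}` for `x > 0`. -/
lemma log_le_rpow8 {x : ℝ} (hx : 0 < x) : Real.log x ≤ 8 * x ^ ((1 : ℝ) / 8) := by
  have h := Real.log_le_sub_one_of_pos (Real.rpow_pos_of_pos hx ((1:ℝ)/8))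
  rw [Real.log_rpow hx] at h
  nlinarith [Real.rpow_nonneg hx.le ((1:ℝ)/8)]

lemma nat_rpow_tendsto {p : ℝ} (hp : 0 < p) :
    Tendsto (fun k : ℕ => (k : ℝ) ^ p) atTop atTop :=
  (tendsto_rpow_atTop hp).comp tendsto_natCast_atTop_atTop

lemma log_E (k : ℕ) : Real.log (E k) = (k : ℝ) ^ ((3 : ℝ) / 4) := by
  unfold E; exact Real.log_exp _

lemma E_succ_le {k : ℕ} (hk : 1 ≤ k) :
    E (k + 1) ≤ E k * Real.exp ((k : ℝ) ^ (-(1 : ℝ) / 4)) := by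
  unfold E
  rw [← Real.exp_add]
  apply Real.exp_le_exp.mpr
  push_cast
  exact succ_rpow_le hk

lemma E_tendsto : Tendsto E atTop atTop :=
  Real.tendsto_exp_atTop.comp (nat_rpow_tendsto (by norm_num))



variable {α : ℝ}

/-- Basic facts at index `k` when `k ≥ 1`. -/
lemma basics {k : ℕ} (hk1 : 1 ≤ k) (hE4 : (4:ℝ) ≤ E k) :
    (0:ℝ) < k ∧ (1:ℝ) ≤ (k:ℝ) ∧ (3:ℝ) < (sparseSeq k : ℝ) ∧
      1 < Real.log (sparseSeq k) := by
  have hk0 : (0:ℝ) < k := by positivity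
  have hk1' : (1:ℝ) ≤ (k:ℝ) := by exact_mod_cast hk1
  have hn3 : (3:ℝ) < (sparseSeq k : ℝ) := lt_of_le_of_lt (by linarith) (lt_sparse k)
  have hexp1 : Real.exp 1 < 3 := lt_trans Real.exp_one_lt_d9 (by norm_num)
  exact ⟨hk0, hk1', hn3, (Real.lt_log_iff_exp_lt (by linarith)).mpr (by linarith)⟩

lemma E_succ_ge4 {k : ℕ} (hE4 : (4:ℝ) ≤ E k) : (4:ℝ) ≤ E (k+1) :=
  le_trans hE4 (by
    apply Real.exp_le_exp.mpr
    exact Real.rpow_le_rpow (Nat.cast_nonneg _) (by exact_mod_cast Nat.le_succ k) (by norm_num))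

lemma evA (hα : 0 < α) {m : ℕ} (hm : 0 < m) (M : ℤ) :
    ∀ᶠ k : ℕ in atTop, α * m * ((sparseSeq k : ℝ) - 1) /
        (Real.log (sparseSeq k) * Real.log (Real.log (sparseSeq k))) > (M : ℝ) + 1 := by
  have hm' : (0:ℝ) < m := by exact_mod_cast hm
  have hnm : (0:ℝ) < α * m / 2 := by positivity
  have hFtend : Tendsto (fun k : ℕ => α * m / 2 * (E k / (k:ℝ) ^ ((3:ℝ)/2))) atTop atTop := by
    apply Tendsto.const_mul_atTop hnm
    have comp := (tendsto_exp_div_rpow_atTop 2).comp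
      (nat_rpow_tendsto (p := (3:ℝ)/4) (by norm_num))
    refine comp.congr fun k => ?_
    simp only [Function.comp_apply]
    rw [← Real.rpow_mul (Nat.cast_nonneg k)]
    norm_num [E]
  filter_upwards [eventually_ge_atTop 1, E_tendsto.eventually_ge_atTop 4,
    hFtend.eventually_gt_atTop ((M:ℝ) + 1)] with k hk1 hE4 hAk
  obtain ⟨hk0, hk1', hn3, hL1⟩ := basics hk1 hE4
  set L := Real.log (sparseSeq k) with hL_def
  have hn_pos : (0:ℝ) < (sparseSeq k : ℝ) := by linarith
  have hL_le : L ≤ (k:ℝ) ^ ((3:ℝ)/4) := by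
    have h := Real.log_le_log hn_pos (sparse_le k)
    rwa [log_E] at h
  have hlogL_pos : 0 < Real.log L := Real.log_pos hL1
  have hk34_pos : (0:ℝ) < (k:ℝ) ^ ((3:ℝ)/4) := Real.rpow_pos_of_pos hk0 _
  have hlogL_le : Real.log L ≤ (k:ℝ) ^ ((3:ℝ)/4) := by
    have h1 : Real.log L ≤ Real.log ((k:ℝ) ^ ((3:ℝ)/4)) :=
      Real.log_le_log (by linarith) hL_le
    have h2 := Real.log_le_sub_one_of_pos hk34_pos
    linarith
  have hD_pos : 0 < L * Real.log L := mul_pos (by linarith) hlogL_pos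
  have hD_le : L * Real.log L ≤ (k:ℝ) ^ ((3:ℝ)/2) := by
    have h := mul_le_mul hL_le hlogL_le hlogL_pos.le hk34_pos.le
    calc L * Real.log L ≤ (k:ℝ) ^ ((3:ℝ)/4) * (k:ℝ) ^ ((3:ℝ)/4) := h
      _ = (k:ℝ) ^ ((3:ℝ)/2) := by rw [← Real.rpow_add hk0]; norm_num
  have h1 : E k / 2 ≤ (sparseSeq k : ℝ) - 1 := by
    have := lt_sparse k
    linarith
  have h2 : α * m * (E k / 2) ≤ α * m * ((sparseSeq k : ℝ) - 1) :=
    mul_le_mul_of_nonneg_left h1 (by positivity)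
  have h0 : (0:ℝ) ≤ α * m * (E k / 2) :=
    mul_nonneg (mul_nonneg hα.le hm'.le) (by linarith [E_pos k])
  have h3 : α * m * (E k / 2) / (k:ℝ) ^ ((3:ℝ)/2)
      ≤ α * m * ((sparseSeq k : ℝ) - 1) / (L * Real.log L) :=
    div_le_div₀ (le_trans h0 h2) h2 hD_pos hD_le
  have h4 : α * m / 2 * (E k / (k:ℝ) ^ ((3:ℝ)/2))
      = α * m * (E k / 2) / (k:ℝ) ^ ((3:ℝ)/2) := by ring
  rw [h4] at hAk
  linarith

lemma evB (hα : 0 < α) :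
    ∀ᶠ k : ℕ in atTop, Real.log (sparseSeq (k + 1)) * Real.log (Real.log (sparseSeq (k + 1))) -
        Real.log (sparseSeq k) * Real.log (Real.log (sparseSeq k)) < α / 2 := by
  filter_upwards [eventually_ge_atTop 1, E_tendsto.eventually_ge_atTop 4,
    (nat_rpow_tendsto (p := (5:ℝ)/4) (by norm_num)).eventually_ge_atTop 8,
    (nat_rpow_tendsto (p := (1:ℝ)/8) (by norm_num)).eventually_ge_atTop 1,
    (nat_rpow_tendsto (p := (1:ℝ)/8) (by norm_num)).eventually_gt_atTop (72/α)]
    with k hk1 hE4 h54 hk18one h18a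
  obtain ⟨hk0, hk1', hn3, hL1⟩ := basics hk1 hE4
  obtain ⟨-, -, hn3', hL'1⟩ := basics (le_trans hk1 (Nat.le_succ k)) (E_succ_ge4 hE4)
  set L := Real.log (sparseSeq k) with hL_def
  set L' := Real.log (sparseSeq (k+1)) with hL'_def
  have hn_pos : (0:ℝ) < (sparseSeq k : ℝ) := by linarith
  have hn_pos' : (0:ℝ) < (sparseSeq (k+1) : ℝ) := by linarith
  have hk18 : (0:ℝ) < (k:ℝ) ^ ((1:ℝ)/8) := Real.rpow_pos_of_pos hk0 _
  have hk14one : (1:ℝ) ≤ (k:ℝ) ^ ((1:ℝ)/4) := by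
    calc (1:ℝ) = (1:ℝ) ^ ((1:ℝ)/4) := (Real.one_rpow _).symm
      _ ≤ (k:ℝ) ^ ((1:ℝ)/4) := Real.rpow_le_rpow (by norm_num) hk1' (by norm_num)
  have hE14 : (k:ℝ) ^ ((1:ℝ)/4) ≤ E k - 1 := by
    have h1 := k32_le_E k
    have h2 : (k:ℝ) ^ ((3:ℝ)/2) = (k:ℝ) ^ ((1:ℝ)/4) * (k:ℝ) ^ ((5:ℝ)/4) := by
      rw [← Real.rpow_add hk0]; norm_num
    have h3 : (k:ℝ) ^ ((1:ℝ)/4) * 8 ≤ (k:ℝ) ^ ((1:ℝ)/4) * (k:ℝ) ^ ((5:ℝ)/4) :=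
      mul_le_mul_of_nonneg_left h54 (by positivity)
    rw [h2] at h1
    linarith
  have hL'_le : L' ≤ ((k:ℝ) + 1) ^ ((3:ℝ)/4) := by
    have h := Real.log_le_log hn_pos' (sparse_le (k+1))
    rw [log_E] at h
    push_cast at h
    exact h
  have hLL' : L ≤ L' := Real.log_le_log hn_pos
    (by exact_mod_cast sparse_mono (Nat.le_succ k))
  have hlogL'_pos : 0 < Real.log L' := Real.log_pos hL'1
  have hL_pos : (0:ℝ) < L := lt_trans one_pos hL1
  have hL'_pos : (0:ℝ) < L' := lt_trans one_pos hL'1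
  have hlog_diff : Real.log L' - Real.log L ≤ (L' - L) / L := by
    rw [← Real.log_div (ne_of_gt hL'_pos) (ne_of_gt hL_pos)]
    have h1 := Real.log_le_sub_one_of_pos (div_pos hL'_pos hL_pos)
    have hLne : L ≠ 0 := ne_of_gt hL_pos
    have heq : L' / L - 1 = (L' - L) / L := by field_simp
    linarith [heq ▸ h1]
  have h5 : L * (Real.log L' - Real.log L) ≤ L' - L := by
    have h := mul_le_mul_of_nonneg_left hlog_diff hL_pos.le
    rw [mul_comm L ((L' - L) / L), div_mul_cancel₀ _ (ne_of_gt hL_pos)] at h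
    exact h
  have halg : L' * Real.log L' - L * Real.log L ≤ (L' - L) * (Real.log L' + 1) := by
    have hid : L' * Real.log L' - L * Real.log L
        = (L' - L) * Real.log L' + L * (Real.log L' - Real.log L) := by ring
    rw [hid]
    have h : (L' - L) * (Real.log L' + 1) = (L' - L) * Real.log L' + (L' - L) := by ring
    linarith
  have hdL : L' - L ≤ 2 * (k:ℝ) ^ (-(1:ℝ)/4) := by
    have ha : Real.log (E k - 1) ≤ L :=
      Real.log_le_log (by linarith) (le_of_lt (lt_sparse k))
    have hb : (k:ℝ) ^ ((3:ℝ)/4) - Real.log (E k - 1) ≤ (k:ℝ) ^ (-(1:ℝ)/4) := by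
      have h1 : Real.log (E k) = (k:ℝ) ^ ((3:ℝ)/4) := log_E k
      have h2 : Real.log (E k) - Real.log (E k - 1) = Real.log (E k / (E k - 1)) :=
        (Real.log_div (ne_of_gt (E_pos k)) (by intro h; linarith)).symm
      have h3 := Real.log_le_sub_one_of_pos
        (div_pos (E_pos k) (by linarith : (0:ℝ) < E k - 1))
      have hne : E k - 1 ≠ 0 := by intro h; linarith
      have h4 : E k / (E k - 1) - 1 = 1 / (E k - 1) := by field_simp; ring
      have h5' : 1 / (E k - 1) ≤ (k:ℝ) ^ (-(1:ℝ)/4) := by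
        rw [show (-(1:ℝ)/4) = -((1:ℝ)/4) by norm_num, Real.rpow_neg hk0.le, ← one_div]
        exact one_div_le_one_div_of_le (Real.rpow_pos_of_pos hk0 _) hE14
      rw [← h1, h2]
      linarith
    have hc : L' ≤ (k:ℝ) ^ ((3:ℝ)/4) + (k:ℝ) ^ (-(1:ℝ)/4) :=
      le_trans hL'_le (succ_rpow_le hk1)
    linarith
  have hlogL'_le : Real.log L' + 1 ≤ 18 * (k:ℝ) ^ ((1:ℝ)/8) := by
    have h1 : Real.log L' ≤ Real.log (((k:ℝ) + 1) ^ ((3:ℝ)/4)) :=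
      Real.log_le_log hL'_pos hL'_le
    have h2 : Real.log (((k:ℝ) + 1) ^ ((3:ℝ)/4)) = (3:ℝ)/4 * Real.log ((k:ℝ) + 1) :=
      Real.log_rpow (show (0:ℝ) < (k:ℝ) + 1 by linarith) ((3:ℝ)/4)
    have h3 : Real.log ((k:ℝ) + 1) ≤ 8 * ((k:ℝ) + 1) ^ ((1:ℝ)/8) :=
      log_le_rpow8 (by linarith)
    have h4 : ((k:ℝ) + 1) ^ ((1:ℝ)/8) ≤ 2 * (k:ℝ) ^ ((1:ℝ)/8) := by
      have h6 : ((k:ℝ) + 1) ^ ((1:ℝ)/8) ≤ (2 * (k:ℝ)) ^ ((1:ℝ)/8) :=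
        Real.rpow_le_rpow (by linarith) (by linarith) (by norm_num)
      have h7 : (2 * (k:ℝ)) ^ ((1:ℝ)/8) = 2 ^ ((1:ℝ)/8) * (k:ℝ) ^ ((1:ℝ)/8) :=
        Real.mul_rpow (by norm_num) hk0.le
      have h8 : (2:ℝ) ^ ((1:ℝ)/8) ≤ 2 := by
        calc (2:ℝ) ^ ((1:ℝ)/8) ≤ 2 ^ (1:ℝ) :=
              Real.rpow_le_rpow_of_exponent_le (by norm_num) (by norm_num)
          _ = 2 := Real.rpow_one 2
      nlinarith [hk18]
    have hlogpos : 0 ≤ Real.log ((k:ℝ) + 1) := Real.log_nonneg (by linarith)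
    linarith
  have hprod : (L' - L) * (Real.log L' + 1)
      ≤ (2 * (k:ℝ) ^ (-(1:ℝ)/4)) * (18 * (k:ℝ) ^ ((1:ℝ)/8)) :=
    mul_le_mul hdL hlogL'_le (by linarith [hlogL'_pos]) (by positivity)
  have hps : (2 * (k:ℝ) ^ (-(1:ℝ)/4)) * (18 * (k:ℝ) ^ ((1:ℝ)/8))
      = 36 * (k:ℝ) ^ (-(1:ℝ)/8) := by
    rw [show (2 * (k:ℝ) ^ (-(1:ℝ)/4)) * (18 * (k:ℝ) ^ ((1:ℝ)/8))
        = 36 * ((k:ℝ) ^ (-(1:ℝ)/4) * (k:ℝ) ^ ((1:ℝ)/8)) by ring, ← Real.rpow_add hk0]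
    norm_num
  have hfin : 36 * (k:ℝ) ^ (-(1:ℝ)/8) < α / 2 := by
    rw [show (-(1:ℝ)/8) = -((1:ℝ)/8) by norm_num, Real.rpow_neg hk0.le]
    have h72 : 72 < (k:ℝ) ^ ((1:ℝ)/8) * α := (div_lt_iff₀ hα).mp h18a
    have heq : (36:ℝ) * ((k:ℝ) ^ ((1:ℝ)/8))⁻¹ = 36 / (k:ℝ) ^ ((1:ℝ)/8) :=
      (div_eq_mul_inv _ _).symm
    rw [heq, div_lt_iff₀ hk18]
    nlinarith
  rw [hps] at hprod
  linarith

lemma evC : ∀ᶠ k : ℕ in atTop, (sparseSeq (k + 1) : ℝ) - (sparseSeq k : ℝ) <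
    (sparseSeq k : ℝ) / (k : ℝ) ^ ((1 : ℝ) / 8) := by
  filter_upwards [eventually_ge_atTop 1, E_tendsto.eventually_ge_atTop 4,
    (nat_rpow_tendsto (p := (11:ℝ)/8) (by norm_num)).eventually_ge_atTop 16,
    (nat_rpow_tendsto (p := (1:ℝ)/8) (by norm_num)).eventually_ge_atTop 6,
    (nat_rpow_tendsto (p := (1:ℝ)/8) (by norm_num)).eventually_ge_atTop 1]
    with k hk1 hE4 h118 h186 hk18one
  obtain ⟨hk0, hk1', hn3, hL1⟩ := basics hk1 hE4
  have hexp1 : Real.exp 1 < 3 := lt_trans Real.exp_one_lt_d9 (by norm_num)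
  have hk18 : (0:ℝ) < (k:ℝ) ^ ((1:ℝ)/8) := Real.rpow_pos_of_pos hk0 _
  have hk14one : (1:ℝ) ≤ (k:ℝ) ^ ((1:ℝ)/4) := by
    calc (1:ℝ) = (1:ℝ) ^ ((1:ℝ)/4) := (Real.one_rpow _).symm
      _ ≤ (k:ℝ) ^ ((1:ℝ)/4) := Real.rpow_le_rpow (by norm_num) hk1' (by norm_num)
  have hE_lb : 4 * (k:ℝ) ^ ((1:ℝ)/8) ≤ E k := by
    have h1 := k32_le_E k
    have h2 : (k:ℝ) ^ ((3:ℝ)/2) = (k:ℝ) ^ ((1:ℝ)/8) * (k:ℝ) ^ ((11:ℝ)/8) := by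
      rw [← Real.rpow_add hk0]; norm_num
    have h3 : (k:ℝ) ^ ((1:ℝ)/8) * 16 ≤ (k:ℝ) ^ ((1:ℝ)/8) * (k:ℝ) ^ ((11:ℝ)/8) :=
      mul_le_mul_of_nonneg_left h118 hk18.le
    rw [h2] at h1
    linarith
  have hδ0 : (0:ℝ) ≤ (k:ℝ) ^ (-(1:ℝ)/4) := Real.rpow_nonneg hk0.le _
  have hδ1 : (k:ℝ) ^ (-(1:ℝ)/4) ≤ 1 := by
    rw [show (-(1:ℝ)/4) = -((1:ℝ)/4) by norm_num, Real.rpow_neg hk0.le]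
    exact inv_le_one_of_one_le₀ hk14one
  have hexpδ : Real.exp ((k:ℝ) ^ (-(1:ℝ)/4)) - 1 ≤ 3 * (k:ℝ) ^ (-(1:ℝ)/4) := by
    set δ := (k:ℝ) ^ (-(1:ℝ)/4) with hδdef
    have h1 := Real.add_one_le_exp (-δ)
    rw [Real.exp_neg] at h1
    have h2 : Real.exp δ ≤ 3 := by
      calc Real.exp δ ≤ Real.exp 1 := Real.exp_le_exp.mpr hδ1
        _ ≤ 3 := by linarith
    have h3 : (1 - δ) * Real.exp δ ≤ 1 := by
      have h := mul_le_mul_of_nonneg_right h1 (Real.exp_pos δ).le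
      rw [inv_mul_cancel₀ (ne_of_gt (Real.exp_pos δ))] at h
      nlinarith [Real.exp_pos δ]
    nlinarith [Real.exp_pos δ]
  have hup : (sparseSeq (k+1) : ℝ) - (sparseSeq k : ℝ)
      < 3 * (k:ℝ) ^ (-(1:ℝ)/4) * E k + 1 := by
    have h1 := sparse_le (k+1)
    have h2 := lt_sparse k
    have h3 : E (k+1) ≤ E k + 3 * (k:ℝ) ^ (-(1:ℝ)/4) * E k := by
      calc E (k+1) ≤ E k * Real.exp ((k:ℝ) ^ (-(1:ℝ)/4)) := E_succ_le hk1
        _ ≤ E k * (1 + 3 * (k:ℝ) ^ (-(1:ℝ)/4)) :=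
          mul_le_mul_of_nonneg_left (by linarith) (E_pos k).le
        _ = E k + 3 * (k:ℝ) ^ (-(1:ℝ)/4) * E k := by ring
    linarith
  have hmain : 3 * (k:ℝ) ^ (-(1:ℝ)/4) * E k + 1 ≤ (E k - 1) / (k:ℝ) ^ ((1:ℝ)/8) := by
    rw [le_div_iff₀ hk18]
    have hsplit : (k:ℝ) ^ (-(1:ℝ)/4) * (k:ℝ) ^ ((1:ℝ)/8) = (k:ℝ) ^ (-(1:ℝ)/8) := by
      rw [← Real.rpow_add hk0]; norm_num
    have hm8 : (k:ℝ) ^ (-(1:ℝ)/8) ≤ 1/6 := by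
      rw [show (-(1:ℝ)/8) = -((1:ℝ)/8) by norm_num, Real.rpow_neg hk0.le, ← one_div]
      exact one_div_le_one_div_of_le (by norm_num) h186
    have hkey : (3 * (k:ℝ) ^ (-(1:ℝ)/4) * E k + 1) * (k:ℝ) ^ ((1:ℝ)/8)
        = 3 * E k * ((k:ℝ) ^ (-(1:ℝ)/8)) + (k:ℝ) ^ ((1:ℝ)/8) := by
      rw [← hsplit]; ring
    rw [hkey]
    have h9 : 3 * E k * ((k:ℝ) ^ (-(1:ℝ)/8)) ≤ E k / 2 := by
      nlinarith [E_pos k, hm8]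
    linarith [hE_lb, hk18one]
  have hdivmono : (E k - 1) / (k:ℝ) ^ ((1:ℝ)/8)
      ≤ (sparseSeq k : ℝ) / (k:ℝ) ^ ((1:ℝ)/8) :=
    (div_le_div_iff_of_pos_right hk18).mpr (lt_sparse k).le
  linarith

end SparseAux

open SparseAux in
theorem sparseSeq_conditions_eventually (α : ℝ) (hα : 0 < α) (m : ℕ) (hm : 0 < m)
    (M : ℤ) (hM : 2 * (m : ℤ) + 1 < M) :
    ∃ N0 : ℕ, ∀ k : ℕ, N0 ≤ k →
      (α * m * ((sparseSeq k : ℝ) - 1) /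
          (Real.log (sparseSeq k) * Real.log (Real.log (sparseSeq k))) > (M : ℝ) + 1) ∧
      (Real.log (sparseSeq (k + 1)) * Real.log (Real.log (sparseSeq (k + 1))) -
          Real.log (sparseSeq k) * Real.log (Real.log (sparseSeq k)) < α / 2) ∧
      ((sparseSeq (k + 1) : ℝ) - (sparseSeq k : ℝ) <
          (sparseSeq k : ℝ) / (k : ℝ) ^ ((1 : ℝ) / 8)) := by
  have key := (evA hα hm M).and ((evB hα).and evC)
  rcases eventually_atTop.mp key with ⟨N0, hN0⟩
  exact ⟨N0, hN0⟩
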